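/- If N^r is a phylogenetic refinement of a degenerate tree-based network D (obtained by replacing each degenerate vertex v̄, having in-degree > 1 and out-degree > 1, by two vertices v̄₁, v̄₂ and an arc (v̄₁, v̄₂), with all incoming arcs of v̄ redirected into v̄₁ and all outgoing arcs out of v̄₂), then N^r is also tree-based; moreover if D is phylogenetically tree-based then so is N^r. -/
import Mathlib


noncomputable def indeg {V : Type*} (A : V → V → Prop) (v : V) : ℕ := {u | A u v}.ncard
noncomputable def outdeg {V : Type*} (A : V → V → Prop) (v : V) : ℕ := {u | A v u}.ncard

/-- Acyclicity of a digraph: no directed cycle. -/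
def Acyc {V : Type*} (A : V → V → Prop) : Prop := ∀ v, ¬ Relation.TransGen A v v

/-- A spanning arborescence (rooted spanning tree) `T` of the digraph `A`, rooted at `ρ`:
a subdigraph in which every non-root vertex has exactly one incoming arc and every
vertex is reachable from the root. -/
def IsArbor {V : Type*} (A T : V → V → Prop) (ρ : V) : Prop :=
  (∀ u v, T u v → A u v) ∧ indeg T ρ = 0 ∧ (∀ v, v ≠ ρ → indeg T v = 1) ∧
  (∀ v, Relation.ReflTransGen T ρ v)

/-- Leaves (out-degree-0 vertices) of a rooted tree. -/
def arbLeaves {V : Type*} (T : V → V → Prop) : Set V := {v | outdeg T v = 0}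

/-- A rooted network is tree-based if it has a rooted spanning tree with leaf set `X`. -/
def RootedTreeBased {V : Type*} (A : V → V → Prop) (ρ : V) (X : Set V) : Prop :=
  ∃ T, IsArbor A T ρ ∧ arbLeaves T = X

/-- Phylogenetically tree-based: some support tree's root has out-degree ≥ 2. -/
def PhyloTreeBased {V : Type*} (A : V → V → Prop) (ρ : V) (X : Set V) : Prop :=
  ∃ T, IsArbor A T ρ ∧ arbLeaves T = X ∧ 2 ≤ outdeg T ρ

/-- A degenerate network: an acyclic digraph with root of in-degree 0 and out-degree ≥ 1,
leaves (in-degree 1, out-degree 0) exactly `X`, and internal vertices of in-degree ≥ 1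
and out-degree ≥ 1 (vertices with both in- and out-degree > 1 are allowed). -/
def IsDegenerate {V : Type*} (A : V → V → Prop) (ρ : V) (X : Set V) : Prop :=
  Acyc A ∧ indeg A ρ = 0 ∧ 1 ≤ outdeg A ρ ∧
  (∀ v, v ∈ X ↔ (indeg A v = 1 ∧ outdeg A v = 0)) ∧
  (∀ v, v ≠ ρ → v ∉ X → 1 ≤ indeg A v ∧ 1 ≤ outdeg A v)

/-- A degenerate vertex: both in-degree and out-degree greater than 1. -/
def DegenVert {V : Type*} (D : V → V → Prop) (v : V) : Prop :=
  2 ≤ indeg D v ∧ 2 ≤ outdeg D v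

/-- The phylogenetic refinement of a degenerate network `D`: every degenerate vertex
`v̄` is replaced by two vertices `v̄₁ = inl v̄` (receiving all incoming arcs) and
`v̄₂ = inr v̄` (emitting all outgoing arcs), joined by the arc `(v̄₁, v̄₂)`. -/
def refineD {V : Type*} (D : V → V → Prop) :
    (V ⊕ {v : V // DegenVert D v}) → (V ⊕ {v : V // DegenVert D v}) → Prop :=
  fun a b =>
    match a, b with
    | Sum.inl u, Sum.inl v => D u v ∧ ¬ DegenVert D u
    | Sum.inr u, Sum.inl v => D u.1 v
    | Sum.inl u, Sum.inr v => u = v.1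
    | Sum.inr _, Sum.inr _ => False

/-- Lift of a spanning tree `T` of `D` to the refinement `refineD D`. -/
def liftT {V : Type*} (D T : V → V → Prop) :
    (V ⊕ {v : V // DegenVert D v}) → (V ⊕ {v : V // DegenVert D v}) → Prop :=
  fun a b =>
    match a, b with
    | Sum.inl u, Sum.inl v => T u v ∧ ¬ DegenVert D u
    | Sum.inr u, Sum.inl v => T u.1 v
    | Sum.inl u, Sum.inr v => u = v.1
    | Sum.inr _, Sum.inr _ => False

lemma main15 {V : Type*} [Finite V] (D : V → V → Prop) (ρ : V) (X : Set V)
    (hD : IsDegenerate D ρ X) (T : V → V → Prop)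
    (hT : IsArbor D T ρ) (hleaf : arbLeaves T = X) :
    IsArbor (refineD D) (liftT D T) (Sum.inl ρ) ∧
    arbLeaves (liftT D T) = Sum.inl '' X ∧
    outdeg (liftT D T) (Sum.inl ρ) = outdeg T ρ := by
  classical
  obtain ⟨hac, hρin, hρout, hXc, hint⟩ := hD
  obtain ⟨hsub, hTρ, hTin, hreach⟩ := hT
  -- no tree arc into ρ
  have hnoρ : ∀ u, ¬ T u ρ := by
    have h0 : {u | T u ρ} = ∅ := (Set.ncard_eq_zero (Set.toFinite _)).mp hTρ
    intro u hu
    have : u ∈ ({u | T u ρ} : Set V) := hu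
    rw [h0] at this; exact this
  -- leaf characterization of T
  have hlf : ∀ v, outdeg T v = 0 ↔ v ∈ X := by
    intro v; rw [← hleaf]; rfl
  -- degenerate vertices are not in X
  have hdegX : ∀ v, DegenVert D v → v ∉ X := by
    intro v hv hvX
    have h1 := hv.2
    have h2 := ((hXc v).mp hvX).2
    omega
  -- degenerate vertices have a tree out-arc
  have hdegout : ∀ v, DegenVert D v → ∃ w, T v w := by
    intro v hv
    have h0 : outdeg T v ≠ 0 := fun h => hdegX v hv ((hlf v).mp h)
    have : ({w | T v w} : Set V).Nonempty :=
      Set.nonempty_of_ncard_ne_zero h0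
    exact this
  -- ρ is not degenerate
  have hρnd : ¬ DegenVert D ρ := by
    intro h; have := h.1; omega
  -- out-neighborhood of a non-degenerate inl vertex
  have houtL : ∀ v : V, ¬ DegenVert D v →
      {b | liftT D T (Sum.inl v) b} = Sum.inl '' {w | T v w} := by
    intro v hv
    ext b
    cases b with
    | inl w =>
      constructor
      · rintro ⟨h, -⟩; exact ⟨w, h, rfl⟩
      · rintro ⟨w', hw', hew⟩
        cases hew
        exact ⟨hw', hv⟩
    | inr w =>
      constructor
      · rintro rfl; exact absurd w.2 hv
      · rintro ⟨w', hw', hew⟩; simp at hew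
  have houtdeg : ∀ v : V, ¬ DegenVert D v →
      outdeg (liftT D T) (Sum.inl v) = outdeg T v := by
    intro v hv
    show ({b | liftT D T (Sum.inl v) b}).ncard = _
    rw [houtL v hv, Set.ncard_image_of_injective _ Sum.inl_injective]
    rfl
  -- subgraph
  have harb : IsArbor (refineD D) (liftT D T) (Sum.inl ρ) := by
    refine ⟨?_, ?_, ?_, ?_⟩
    · rintro (u | u) (v | v) h
      · exact ⟨hsub _ _ h.1, h.2⟩
      · exact h
      · exact hsub _ _ h
      · exact h.elim
    · -- indeg at root is 0
      have : {a | liftT D T a (Sum.inl ρ)} = ∅ := by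
        ext a
        cases a with
        | inl u => exact ⟨fun h => hnoρ u h.1, fun h => h.elim⟩
        | inr u => exact ⟨fun h => hnoρ u.1 h, fun h => h.elim⟩
      show ({a | liftT D T a (Sum.inl ρ)}).ncard = 0
      rw [this, Set.ncard_empty]
    · -- indeg elsewhere is 1
      rintro (v | v) hv
      · have hvρ : v ≠ ρ := by rintro rfl; exact hv rfl
        obtain ⟨u0, hu0⟩ := Set.ncard_eq_one.mp (hTin v hvρ)
        have hu0T : T u0 v := by
          have : u0 ∈ ({u | T u v} : Set V) := by rw [hu0]; rfl
          exact this
        have huniq : ∀ u, T u v → u = u0 := by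
          intro u hu
          have : u ∈ ({u | T u v} : Set V) := hu
          rw [hu0] at this; exact this
        by_cases hd : DegenVert D u0
        · have : {a | liftT D T a (Sum.inl v)} = {Sum.inr ⟨u0, hd⟩} := by
            ext a
            cases a with
            | inl u =>
              constructor
              · rintro ⟨h1, h2⟩
                exact absurd (huniq u h1 ▸ hd) h2
              · intro h; simp at h
            | inr u =>
              constructor
              · intro h
                have := huniq u.1 h
                exact Set.mem_singleton_iff.mpr (congrArg Sum.inr (Subtype.ext this))
              · intro h
                simp at h
                subst h
                exact hu0T
          show ({a | liftT D T a (Sum.inl v)}).ncard = 1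
          rw [this, Set.ncard_singleton]
        · have : {a | liftT D T a (Sum.inl v)} = {Sum.inl u0} := by
            ext a
            cases a with
            | inl u =>
              constructor
              · rintro ⟨h1, -⟩; simp [huniq u h1]
              · intro h; simp at h; subst h; exact ⟨hu0T, hd⟩
            | inr u =>
              constructor
              · intro h
                exact absurd (huniq u.1 h ▸ u.2) hd
              · intro h; simp at h
          show ({a | liftT D T a (Sum.inl v)}).ncard = 1
          rw [this, Set.ncard_singleton]
      · -- indeg of inr v is 1
        have : {a | liftT D T a (Sum.inr v)} = {Sum.inl v.1} := by
          ext a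
          cases a with
          | inl u =>
            constructor
            · intro h; simp [liftT] at h; simp [h]
            · intro h; simp at h; subst h; rfl
          | inr u =>
            exact ⟨fun h => h.elim, fun h => by simp at h⟩
        show ({a | liftT D T a (Sum.inr v)}).ncard = 1
        rw [this, Set.ncard_singleton]
    · -- reachability
      have hL : ∀ v, Relation.ReflTransGen (liftT D T) (Sum.inl ρ) (Sum.inl v) := by
        intro v
        induction hreach v with
        | refl => exact Relation.ReflTransGen.refl
        | tail hbc hTbc ih =>
          rename_i b c
          by_cases hd : DegenVert D b
          · exact (ih.tail (show liftT D T (Sum.inl b) (Sum.inr ⟨b, hd⟩) from rfl)).tail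
              (show liftT D T (Sum.inr ⟨b, hd⟩) (Sum.inl c) from hTbc)
          · exact ih.tail ⟨hTbc, hd⟩
      rintro (v | v)
      · exact hL v
      · exact (hL v.1).tail (show liftT D T (Sum.inl v.1) (Sum.inr v) from rfl)
  refine ⟨harb, ?_, houtdeg ρ hρnd⟩
  -- leaves
  ext b
  cases b with
  | inl v =>
    by_cases hd : DegenVert D v
    · constructor
      · intro h
        have h1 : liftT D T (Sum.inl v) (Sum.inr ⟨v, hd⟩) := rfl
        have h2 : Sum.inr ⟨v, hd⟩ ∈ ({b | liftT D T (Sum.inl v) b} : Set _) := h1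
        have := (Set.ncard_eq_zero (Set.toFinite _)).mp h
        rw [this] at h2
        exact absurd h2 (Set.notMem_empty _)
      · rintro ⟨w, hw, hew⟩
        cases hew
        exact absurd hw (hdegX v hd)
    · constructor
      · intro h
        have : outdeg T v = 0 := by rw [← houtdeg v hd]; exact h
        exact ⟨v, (hlf v).mp this, rfl⟩
      · rintro ⟨w, hw, hew⟩
        obtain rfl := Sum.inl_injective hew
        show outdeg (liftT D T) (Sum.inl w) = 0
        rw [houtdeg w hd]
        exact (hlf w).mpr hw
  | inr v =>
    constructor
    · intro h
      obtain ⟨w, hw⟩ := hdegout v.1 v.2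
      have h2 : Sum.inl w ∈ ({b | liftT D T (Sum.inr v) b} : Set _) := hw
      have := (Set.ncard_eq_zero (Set.toFinite _)).mp h
      rw [this] at h2
      exact absurd h2 (Set.notMem_empty _)
    · rintro ⟨w, hw, hew⟩
      simp at hew

theorem stmt15 {V : Type*} [Finite V] (D : V → V → Prop) (ρ : V) (X : Set V)
    (hD : IsDegenerate D ρ X) (hTB : RootedTreeBased D ρ X) :
    RootedTreeBased (refineD D) (Sum.inl ρ) (Sum.inl '' X) ∧
    (PhyloTreeBased D ρ X →
      PhyloTreeBased (refineD D) (Sum.inl ρ) (Sum.inl '' X)) := by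
  constructor
  · obtain ⟨T, hT, hleaf⟩ := hTB
    obtain ⟨h1, h2, _⟩ := main15 D ρ X hD T hT hleaf
    exact ⟨liftT D T, h1, h2⟩
  · rintro ⟨T, hT, hleaf, hdeg⟩
    obtain ⟨h1, h2, h3⟩ := main15 D ρ X hD T hT hleaf
    exact ⟨liftT D T, h1, h2, h3 ▸ hdeg⟩
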